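/- If Φ is a Σ_ucr-simulation from G to R that is uniform with respect to Σᵣ, then there exists a Σ_ucr-controllability set from G to R; concretely, E = { W_s : s ∈ Σ* } with W_s = { (x,z) ∈ Φ : x is s-reachable in G and z is s-reachable in R } is such a set. -/
import Mathlib


/-- An automaton with state type `S` and event alphabet `E`:
a transition relation and a set of initial states. -/
structure Automaton (S : Type) (E : Type) where
  trans : S → E → S → Prop
  init : Set S

/-- Extension of the transition relation to finite event sequences. -/
def TransSeq {S E : Type} (G : Automaton S E) : S → List E → S → Prop
  | x, [], x' => x = x'
  | x, σ :: s, x'' => ∃ x', G.trans x σ x' ∧ TransSeq G x' s x''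

/-- `x` is `s`-reachable in `G`. -/
def ReachSeq {S E : Type} (G : Automaton S E) (s : List E) (x : S) : Prop :=
  ∃ x₀ ∈ G.init, TransSeq G x₀ s x

/-- `x` is reachable in `G`. -/
def Reachable {S E : Type} (G : Automaton S E) (x : S) : Prop :=
  ∃ s : List E, ReachSeq G s x

/-- The language of an automaton: all event sequences executable from some initial state. -/
def Lang {S E : Type} (G : Automaton S E) : Set (List E) :=
  {s | ∃ x, ReachSeq G s x}

/-- `Φ` is a simulation from `G` to `R`. -/
def IsSimulation {X Z E : Type} (G : Automaton X E) (R : Automaton Z E)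
    (Φ : Set (X × Z)) : Prop :=
  (∀ x₀ ∈ G.init, ∃ z₀ ∈ R.init, (x₀, z₀) ∈ Φ) ∧
  (∀ p ∈ Φ, ∀ (σ : E), ∀ x', G.trans p.1 σ x' →
    ∃ z', R.trans p.2 σ z' ∧ (x', z') ∈ Φ)

/-- `G` is simulated by `R` (`G ⊑ R`). -/
def Simulated {X Z E : Type} (G : Automaton X E) (R : Automaton Z E) : Prop :=
  ∃ Φ, IsSimulation G R Φ

/-- `Φ` is a covariant-contravariant simulation from `G` to `R`, with required events `Sr`. -/
def IsCCSimulation {X Z E : Type} (Sr : Set E) (G : Automaton X E) (R : Automaton Z E)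
    (Φ : Set (X × Z)) : Prop :=
  IsSimulation G R Φ ∧
  (∀ p ∈ Φ, ∀ σ ∈ Sr, ∀ z', R.trans p.2 σ z' →
    ∃ x', G.trans p.1 σ x' ∧ (x', z') ∈ Φ)

/-- `G` is cc-simulated by `R` (`G ⊑_cc R`). -/
def CCSimulated {X Z E : Type} (Sr : Set E) (G : Automaton X E) (R : Automaton Z E) : Prop :=
  ∃ Φ, IsCCSimulation Sr G R Φ

/-- `Φ` is a bisimulation from `G` to `R`: both `Φ` and its inverse are simulations. -/
def IsBisimulation {X Z E : Type} (G : Automaton X E) (R : Automaton Z E)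
    (Φ : Set (X × Z)) : Prop :=
  IsSimulation G R Φ ∧ IsSimulation R G {p | (p.2, p.1) ∈ Φ}

/-- `G` is bisimilar to `R` (`G ≃ R`). -/
def Bisimilar {X Z E : Type} (G : Automaton X E) (R : Automaton Z E) : Prop :=
  ∃ Φ, IsBisimulation G R Φ

/-- `Φ` is a `Σ_uc`-simulation from `G` to `R`. -/
def IsUcSimulation {X Z E : Type} (Suc : Set E) (G : Automaton X E) (R : Automaton Z E)
    (Φ : Set (X × Z)) : Prop :=
  (∀ x₀ ∈ G.init, ∃ z₀ ∈ R.init, (x₀, z₀) ∈ Φ) ∧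
  (∀ p ∈ Φ, ∀ σ ∈ Suc, ∀ x', G.trans p.1 σ x' →
    ∃ z', R.trans p.2 σ z' ∧ (x', z') ∈ Φ)

/-- `Φ` is a `Σ_ucr`-simulation from `G` to `R`:
(initial state), (Σ_uc-forward) and (Σ_r-backward). -/
def IsUcrSimulation {X Z E : Type} (Suc Sr : Set E) (G : Automaton X E) (R : Automaton Z E)
    (Φ : Set (X × Z)) : Prop :=
  IsUcSimulation Suc G R Φ ∧
  (∀ p ∈ Φ, ∀ σ ∈ Sr, ∀ z', R.trans p.2 σ z' →
    ∃ x', G.trans p.1 σ x' ∧ (x', z') ∈ Φ)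

/-- Synchronous composition `S || G`. -/
def Sync {Y X E : Type} (S : Automaton Y E) (G : Automaton X E) : Automaton (Y × X) E where
  trans p σ q := S.trans p.1 σ q.1 ∧ G.trans p.2 σ q.2
  init := S.init ×ˢ G.init

/-- `S` is `Σ_uc`-admissible with respect to `G`. -/
def Admissible {Y X E : Type} (Suc : Set E) (S : Automaton Y E) (G : Automaton X E) : Prop :=
  ∀ p : Y × X, Reachable (Sync S G) p → ∀ σ ∈ Suc,
    (∃ x', G.trans p.2 σ x') → ∃ q, (Sync S G).trans p σ q

/-- `match_{G,R}(W, σ, W')`. -/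
def MatchW {X Z E : Type} (G : Automaton X E) (R : Automaton Z E)
    (W : Set (X × Z)) (σ : E) (W' : Set (X × Z)) : Prop :=
  ∀ p ∈ W, ∀ x', G.trans p.1 σ x' →
    ∃ z', R.trans p.2 σ z' ∧ (x', z') ∈ W'

/-- `Ecs` is a `Σ_ucr`-controllability set from `G` to `R`. -/
def ControlSet {X Z E : Type} (Suc Sr : Set E) (G : Automaton X E) (R : Automaton Z E)
    (Ecs : Set (Set (X × Z))) : Prop :=
  (∃ W₀ ∈ Ecs, ∀ x₀ ∈ G.init, ∃ z₀ ∈ R.init, (x₀, z₀) ∈ W₀) ∧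
  (∀ W ∈ Ecs, ∀ σ ∈ Suc, ∃ W' ∈ Ecs, MatchW G R W σ W') ∧
  (∀ W ∈ Ecs, ∀ p ∈ W, ∀ σ ∈ Sr, ∀ z', R.trans p.2 σ z' →
    ∃ x', ∃ W' ∈ Ecs, G.trans p.1 σ x' ∧ (x', z') ∈ W' ∧ MatchW G R W σ W')

/-- The downward closure `P(E) = ⋃_{W ∈ E} 𝒫(W)`. -/
def PE {X Z : Type} (Ecs : Set (Set (X × Z))) : Set (Set (X × Z)) :=
  {W | ∃ W' ∈ Ecs, W ⊆ W'}

/-- `⋃_{(x,z) ∈ W} {x' : x →σ x'} × {z' : z →σ z'}`. -/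
def SuccSet {X Z E : Type} (G : Automaton X E) (R : Automaton Z E)
    (W : Set (X × Z)) (σ : E) : Set (X × Z) :=
  {q | ∃ p ∈ W, G.trans p.1 σ q.1 ∧ R.trans p.2 σ q.2}

/-- The automaton `𝒜(E)` induced by a `Σ_ucr`-controllability set `Ecs`.
Its states are the members of `P(Ecs)` (enforced in the transition relation
and initial-state set). -/
def AutA {X Z E : Type} (G : Automaton X E) (R : Automaton Z E)
    (Ecs : Set (Set (X × Z))) : Automaton (Set (X × Z)) E where
  trans W σ W' :=
    W ∈ PE Ecs ∧ W' ∈ PE Ecs ∧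
    (∃ p ∈ W, ∃ q ∈ W', G.trans p.1 σ q.1 ∧ R.trans p.2 σ q.2) ∧
    MatchW G R W σ W' ∧ W' ⊆ SuccSet G R W σ
  init := {W₀ | W₀ ∈ PE Ecs ∧ W₀ ⊆ G.init ×ˢ R.init ∧
    ∀ x₀ ∈ G.init, ∃ z₀ ∈ R.init, (x₀, z₀) ∈ W₀}

/-- A deterministic automaton: a single initial state, and at most one
`σ`-successor of each state. -/
def Deterministic {S E : Type} (G : Automaton S E) : Prop :=
  (∃ x₀, G.init = {x₀}) ∧
  ∀ x (σ : E) x₁ x₂, G.trans x σ x₁ → G.trans x σ x₂ → x₁ = x₂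

/-- `Φ` is uniform with respect to `Sr`. -/
def UniformRel {X Z E : Type} (Sr : Set E) (G : Automaton X E) (R : Automaton Z E)
    (Φ : Set (X × Z)) : Prop :=
  ∀ (s : List E), ∀ p₁ ∈ Φ, ∀ p₂ ∈ Φ,
    ReachSeq G s p₁.1 → ReachSeq G s p₂.1 → ReachSeq R s p₁.2 → ReachSeq R s p₂.2 →
    ∀ σ ∈ Sr, (∃ z', R.trans p₁.2 σ z') → ∀ x₂', G.trans p₂.1 σ x₂' →
      ∃ z₂', R.trans p₂.2 σ z₂' ∧ (x₂', z₂') ∈ Φ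

/-- The fixpoint operator `F_{(G,R)}`. -/
def Fop {X Z E : Type} (Suc Sr : Set E) (G : Automaton X E) (R : Automaton Z E)
    (Ecs : Set (Set (X × Z))) : Set (Set (X × Z)) :=
  {W | W ∈ Ecs ∧
    (∀ σ ∈ Suc, ∃ W' ∈ Ecs, MatchW G R W σ W') ∧
    (∀ p ∈ W, ∀ σ ∈ Sr, ∀ z', R.trans p.2 σ z' →
      ∃ x', ∃ W' ∈ Ecs, G.trans p.1 σ x' ∧ (x', z') ∈ W' ∧ MatchW G R W σ W')}

/-- The greatest fixpoint `E↑` of `F_{(G,R)}`: the union of all post-fixpoints. -/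
def Egfp {X Z E : Type} (Suc Sr : Set E) (G : Automaton X E) (R : Automaton Z E) :
    Set (Set (X × Z)) :=
  ⋃₀ {Ecs | Ecs ⊆ Fop Suc Sr G R Ecs}

lemma transSeq_snoc {S E : Type} (G : Automaton S E) {x x' x'' : S} {s : List E} {σ : E}
    (h : TransSeq G x s x') (h' : G.trans x' σ x'') : TransSeq G x (s ++ [σ]) x'' := by
  induction s generalizing x with
  | nil => exact ⟨x'', by cases h; exact h', rfl⟩
  | cons a t ih =>
    obtain ⟨y, hy, ht⟩ := h
    exact ⟨y, hy, ih ht⟩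

lemma reachSeq_snoc {S E : Type} (G : Automaton S E) {x x' : S} {s : List E} {σ : E}
    (h : ReachSeq G s x) (h' : G.trans x σ x') : ReachSeq G (s ++ [σ]) x' := by
  obtain ⟨x₀, h₀, ht⟩ := h
  exact ⟨x₀, h₀, transSeq_snoc G ht h'⟩

/-- a uniform `Σ_ucr`-simulation yields a `Σ_ucr`-controllability set,
namely `E = { W_s : s ∈ Σ* }`. -/
theorem uniform_ucrSimulation_controlSet {E X Z : Type} (Suc Sr : Set E)
    (G : Automaton X E) (R : Automaton Z E) (Φ : Set (X × Z))
    (hΦ : IsUcrSimulation Suc Sr G R Φ)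
    (hU : UniformRel Sr G R Φ) :
    ControlSet Suc Sr G R
      {W | ∃ s : List E, W = {p ∈ Φ | ReachSeq G s p.1 ∧ ReachSeq R s p.2}} ∧
    ∃ Ecs : Set (Set (X × Z)), ControlSet Suc Sr G R Ecs := by
  obtain ⟨⟨hinit, hfwd⟩, hbwd⟩ := hΦ
  have main : ControlSet Suc Sr G R
      {W | ∃ s : List E, W = {p ∈ Φ | ReachSeq G s p.1 ∧ ReachSeq R s p.2}} := by
    refine ⟨⟨_, ⟨([] : List E), rfl⟩, ?_⟩, ?_, ?_⟩
    · intro x₀ hx₀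
      obtain ⟨z₀, hz₀, hp⟩ := hinit x₀ hx₀
      exact ⟨z₀, hz₀, hp, ⟨x₀, hx₀, rfl⟩, ⟨z₀, hz₀, rfl⟩⟩
    · rintro W ⟨s, rfl⟩ σ hσ
      refine ⟨_, ⟨s ++ [σ], rfl⟩, ?_⟩
      rintro p ⟨hpΦ, hpG, hpR⟩ x' hx'
      obtain ⟨z', hz', hp'⟩ := hfwd p hpΦ σ hσ x' hx'
      exact ⟨z', hz', hp', reachSeq_snoc G hpG hx', reachSeq_snoc R hpR hz'⟩
    · rintro W ⟨s, rfl⟩ p ⟨hpΦ, hpG, hpR⟩ σ hσ z' hz'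
      obtain ⟨x', hx', hp'⟩ := hbwd p hpΦ σ hσ z' hz'
      refine ⟨x', _, ⟨s ++ [σ], rfl⟩, hx',
        ⟨hp', reachSeq_snoc G hpG hx', reachSeq_snoc R hpR hz'⟩, ?_⟩
      rintro q ⟨hqΦ, hqG, hqR⟩ x₂' hx₂'
      obtain ⟨z₂', hz₂', hq'⟩ := hU s p hpΦ q hqΦ hpG hqG hpR hqR σ hσ ⟨z', hz'⟩ x₂' hx₂'
      exact ⟨z₂', hz₂', hq', reachSeq_snoc G hqG hx₂', reachSeq_snoc R hqR hz₂'⟩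
  exact ⟨main, _, main⟩
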